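/- Let H be a reproducing kernel Hilbert space on X with kernel K, let L be a closed subspace of H with kernel K^L(x,y) = ⟨P_L k_y, k_x⟩, and let F = (f_1,...,f_m) be a column of multipliers of H leaving L invariant. Fix points x_1,...,x_n ∈ X, scalars w_1,...,w_n ∈ ℂ, vectors v_1,...,v_n ∈ ℂ^m, and suppose M_F^*(k^L_{x_i} ⊗ v_i) = conj(w_i) k^L_{x_i} for each i. Then the restriction of (P_L ⊗ I) M_F^* to M_L = span{ k^L_{x_i} ⊗ v_i : i=1..n } is a contraction if and only if the n×n matrix [ (⟨v_j, v_i⟩ − w_i conj(w_j)) K^L(x_i, x_j) ] is positive semidefinite. -/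

import Mathlib

open scoped ComplexOrder

/-- Let `L` be a closed subspace of a reproducing kernel Hilbert space `H`
invariant under the multipliers `f_1,…,f_m` of the column `F`, with kernel
`K^L(x,y) = ⟨P_L k_y, k_x⟩`.  Given points `x i`, scalars `w i` and vectors
`v i ∈ ℂ^m` with `M_F*(k^L_{x_i} ⊗ v_i) = conj (w i) • k^L_{x_i}`, the restriction of
`P_L M_F*` to `M_L = span{k^L_{x_i} ⊗ v_i}` is a contraction iff the `n×n` matrix
`[(⟨v_j, v_i⟩ − w_i conj w_j) K^L(x_i, x_j)]` is positive semidefinite. -/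
theorem stmt_5 {X : Type*} {H : Type*} [NormedAddCommGroup H] [InnerProductSpace ℂ H]
    [CompleteSpace H] (E : H →ₗ[ℂ] (X → ℂ)) (hE : Function.Injective E)
    (k : X → H) (hk : ∀ (f : H) (x : X), E f x = (inner ℂ (k x) f : ℂ))
    (L : Submodule ℂ H) [CompleteSpace L]
    (m n : ℕ) (f : Fin m → X → ℂ) (Mf : Fin m → (H →L[ℂ] H))
    (hMf : ∀ (j : Fin m) (h : H) (x : X), E (Mf j h) x = f j x * E h x)
    (hinv : ∀ (j : Fin m), ∀ h ∈ L, Mf j h ∈ L)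
    (x : Fin n → X) (w : Fin n → ℂ) (v : Fin n → EuclideanSpace ℂ (Fin m)) :
    letI : CompleteSpace (PiLp 2 (fun _ : Fin m => H)) :=
      inferInstance
    let colF : H →L[ℂ] PiLp 2 (fun _ : Fin m => H) :=
      ((PiLp.continuousLinearEquiv 2 ℂ (fun _ : Fin m => H)).symm.toContinuousLinearMap).comp
        (ContinuousLinearMap.pi fun j => Mf j)
    let kL : Fin n → H := fun i => (L.orthogonalProjectionOnto (k (x i)) : H)
    let kv : Fin n → PiLp 2 (fun _ : Fin m => H) := fun i =>
      (WithLp.equiv 2 (∀ _ : Fin m, H)).symm (fun j => v i j • kL i)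
    (∀ i : Fin n, ContinuousLinearMap.adjoint colF (kv i) = (starRingEnd ℂ) (w i) • kL i) →
    ((∀ u ∈ Submodule.span ℂ (Set.range kv),
        ‖(L.orthogonalProjectionOnto (ContinuousLinearMap.adjoint colF u) : H)‖ ≤ ‖u‖) ↔
      Matrix.PosSemidef (Matrix.of fun i j : Fin n =>
        ((inner ℂ (v i) (v j) : ℂ) - w i * (starRingEnd ℂ) (w j)) *
          (inner ℂ (k (x i)) (kL j) : ℂ))) := by
  intro colF kL kv hadj
  letI : CompleteSpace (PiLp 2 (fun _ : Fin m => H)) :=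
    inferInstance
  have hkLmem : ∀ i, kL i ∈ L := fun i => SetLike.coe_mem _
  -- kernel identity: ⟪k xᵢ, kL j⟫ = ⟪kL i, kL j⟫
  have hker : ∀ i j, (inner ℂ (k (x i)) (kL j) : ℂ) = inner ℂ (kL i) (kL j) := by
    intro i j
    have hmem : k (x i) - kL i ∈ Lᗮ :=
      Submodule.sub_starProjection_mem_orthogonal (K := L) (k (x i))
    have h0 : (inner ℂ (k (x i) - kL i) (kL j) : ℂ) = 0 :=
      (Submodule.mem_orthogonal' L _).1 hmem _ (hkLmem j)
    rw [inner_sub_left, sub_eq_zero] at h0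
    exact h0
  -- inner products of the kv's
  have hkv : ∀ i j, (inner ℂ (kv i) (kv j) : ℂ)
      = (inner ℂ (v i) (v j) : ℂ) * inner ℂ (kL i) (kL j) := by
    intro i j
    simp only [kv, PiLp.inner_apply, WithLp.equiv_symm_apply, WithLp.ofLp_toLp, inner_smul_left,
      inner_smul_right, RCLike.inner_apply]
    rw [Finset.sum_mul]
    exact Finset.sum_congr rfl fun t _ => by ring
  -- the projection of the adjoint on a span element
  have hproj : ∀ c : Fin n → ℂ,
      (L.orthogonalProjectionOnto (ContinuousLinearMap.adjoint colF (∑ j, c j • kv j)) : H)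
        = ∑ j, (c j * (starRingEnd ℂ) (w j)) • kL j := by
    intro c
    have h1 : ContinuousLinearMap.adjoint colF (∑ j, c j • kv j)
        = ∑ j, (c j * (starRingEnd ℂ) (w j)) • kL j := by
      rw [map_sum]
      exact Finset.sum_congr rfl fun j _ => by rw [map_smul, hadj j, smul_smul]
    rw [h1, Submodule.coe_orthogonalProjectionOnto_apply, Submodule.starProjection_eq_self_iff.2]
    exact Submodule.sum_mem _ fun j _ => Submodule.smul_mem _ _ (hkLmem j)
  set A : Matrix (Fin n) (Fin n) ℂ := Matrix.of fun i j =>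
    ((inner ℂ (v i) (v j) : ℂ) - w i * (starRingEnd ℂ) (w j)) *
      (inner ℂ (k (x i)) (kL j) : ℂ) with hA
  -- the key quadratic form identity
  have hkey : ∀ c : Fin n → ℂ,
      dotProduct (star c) (A.mulVec c)
        = (((‖∑ j, c j • kv j‖ : ℝ) ^ 2
            - (‖∑ j, (c j * (starRingEnd ℂ) (w j)) • kL j‖ : ℝ) ^ 2 : ℝ) : ℂ) := by
    intro c
    have e1 : (inner ℂ (∑ j, c j • kv j) (∑ j, c j • kv j) : ℂ)
        = ∑ i, ∑ j, (starRingEnd ℂ) (c i) * c j *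
            ((inner ℂ (v i) (v j) : ℂ) * (inner ℂ (kL i) (kL j) : ℂ)) := by
      rw [sum_inner]
      refine Finset.sum_congr rfl fun i _ => ?_
      rw [inner_sum]
      refine Finset.sum_congr rfl fun j _ => ?_
      rw [inner_smul_left, inner_smul_right, hkv]
      ring
    have e2 : (inner ℂ (∑ j, (c j * (starRingEnd ℂ) (w j)) • kL j)
          (∑ j, (c j * (starRingEnd ℂ) (w j)) • kL j) : ℂ)
        = ∑ i, ∑ j, (starRingEnd ℂ) (c i) * c j *
            ((w i * (starRingEnd ℂ) (w j)) * (inner ℂ (kL i) (kL j) : ℂ)) := by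
      rw [sum_inner]
      refine Finset.sum_congr rfl fun i _ => ?_
      rw [inner_sum]
      refine Finset.sum_congr rfl fun j _ => ?_
      rw [inner_smul_left, inner_smul_right]
      simp only [map_mul, Complex.conj_conj]
      ring
    have e3 : dotProduct (star c) (A.mulVec c)
        = ∑ i, ∑ j, (starRingEnd ℂ) (c i) * c j *
            (((inner ℂ (v i) (v j) : ℂ) - w i * (starRingEnd ℂ) (w j)) *
              (inner ℂ (kL i) (kL j) : ℂ)) := by
      simp only [dotProduct, Matrix.mulVec, Matrix.of_apply, Pi.star_apply,
        Complex.star_def, hA, hker]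
      refine Finset.sum_congr rfl fun i _ => ?_
      rw [Finset.mul_sum]
      refine Finset.sum_congr rfl fun j _ => ?_
      ring
    have e4 : dotProduct (star c) (A.mulVec c)
        = (inner ℂ (∑ j, c j • kv j) (∑ j, c j • kv j) : ℂ)
          - (inner ℂ (∑ j, (c j * (starRingEnd ℂ) (w j)) • kL j)
              (∑ j, (c j * (starRingEnd ℂ) (w j)) • kL j) : ℂ) := by
      rw [e1, e2, e3, ← Finset.sum_sub_distrib]
      refine Finset.sum_congr rfl fun i _ => ?_
      rw [← Finset.sum_sub_distrib]
      refine Finset.sum_congr rfl fun j _ => ?_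
      ring
    rw [e4, inner_self_eq_norm_sq_to_K, inner_self_eq_norm_sq_to_K]
    norm_cast
  constructor
  · -- contraction → PSD
    intro hcontr
    refine Matrix.PosSemidef.of_dotProduct_mulVec_nonneg ?_ ?_
    · -- Hermitian
      ext i j
      simp only [Matrix.conjTranspose_apply, hA, Matrix.of_apply, hker, Complex.star_def,
        map_mul, map_sub, inner_conj_symm, Complex.conj_conj]
      ring
    · intro c
      rw [hkey c]
      have hmemspan : (∑ j, c j • kv j) ∈ Submodule.span ℂ (Set.range kv) :=
        Submodule.sum_mem _ fun j _ =>
          Submodule.smul_mem _ _ (Submodule.subset_span ⟨j, rfl⟩)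
      have hle := hcontr _ hmemspan
      rw [hproj c] at hle
      have hsq := pow_le_pow_left₀ (norm_nonneg _) hle 2
      rw [Complex.zero_le_real]
      linarith
  · -- PSD → contraction
    intro hpsd u hu
    obtain ⟨c, rfl⟩ := (Submodule.mem_span_range_iff_exists_fun ℂ).1 hu
    rw [hproj c]
    have h0 := hpsd.dotProduct_mulVec_nonneg c
    rw [hkey c, Complex.zero_le_real] at h0
    have h2 : ‖∑ j, (c j * (starRingEnd ℂ) (w j)) • kL j‖ ^ 2
        ≤ ‖∑ j, c j • kv j‖ ^ 2 := by linarith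
    exact le_of_pow_le_pow_left₀ two_ne_zero (norm_nonneg _) h2
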